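/- With f, U = 1/f(s), F(U) = −s/f(s) as above, the second derivative satisfies F''(U(s)) = f''(s) · f(s)³ / f'(s)³ for all s ∈ (0,1). In particular F''(U(s)) has the same sign as f''(s), so F has a unique inflection point U^I = 1/f(sI), with F'' < 0 for 1 < U < U^I and F'' > 0 for U > U^I. -/

import Mathlib

open Set Filter Topology

/-- If `p ∘ u = q` near `x₀` and `u` has nonzero strict derivative, then
`p` has derivative `q'/u'` at `u x₀`. -/
lemma key_chain {p u q : ℝ → ℝ} {x₀ u' q' : ℝ}
    (hu : HasStrictDerivAt u u' x₀) (hu' : u' ≠ 0)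
    (hq : HasDerivAt q q' x₀)
    (h : ∀ᶠ x in 𝓝 x₀, p (u x) = q x) :
    HasDerivAt p (q' / u') (u x₀) := by
  set φ := hu.localInverse u u' x₀ hu' with hφdef
  have hφ : HasStrictDerivAt φ u'⁻¹ (u x₀) := hu.to_localInverse hu'
  have hcont : ContinuousAt φ (u x₀) :=
    (hu.hasStrictFDerivAt_equiv hu').localInverse_continuousAt
  have hφx : φ (u x₀) = x₀ :=
    (hu.hasStrictFDerivAt_equiv hu').localInverse_apply_image
  have hri : ∀ᶠ y in 𝓝 (u x₀), u (φ y) = y :=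
    (hu.hasStrictFDerivAt_equiv hu').eventually_right_inverse
  have hmem : ∀ᶠ y in 𝓝 (u x₀), p (u (φ y)) = q (φ y) := by
    have ht := hcont.tendsto
    rw [hφx] at ht
    exact ht.eventually h
  have heq : p =ᶠ[𝓝 (u x₀)] (q ∘ φ) := by
    filter_upwards [hri, hmem] with y h1 h2
    simpa [Function.comp, h1] using h2
  have hq' : HasDerivAt q q' (φ (u x₀)) := hφx.symm ▸ hq
  have hc : HasDerivAt (q ∘ φ) (q' * u'⁻¹) (u x₀) :=
    hq'.comp (u x₀) hφ.hasDerivAt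
  have := hc.congr_of_eventuallyEq heq
  simpa [div_eq_mul_inv] using this

/-- The second derivative of the Lagrange flux: F''(U(s)) = f''(s)·f(s)³/f'(s)³;
F has a unique inflection U^I = 1/f(sI): F'' < 0 on (1, U^I) and F'' > 0 beyond. -/
theorem stmt5 (f F : ℝ → ℝ) (sI : ℝ)
    (hf : ContDiff ℝ 2 f) (hf0 : f 0 = 0) (hf1 : f 1 = 1)
    (hf' : ∀ x ∈ Ioo (0:ℝ) 1, 0 < deriv f x)
    (hfpos : ∀ x ∈ Ioo (0:ℝ) 1, 0 < f x)
    (hf_lim : Filter.Tendsto f (nhdsWithin 0 (Ioi 0)) (nhds 0))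
    (hsI : sI ∈ Ioo (0:ℝ) 1)
    (hconv : ∀ x ∈ Ioo (0:ℝ) sI, 0 < deriv (deriv f) x)
    (hconc : ∀ x ∈ Ioo sI 1, deriv (deriv f) x < 0)
    (hF : ∀ x ∈ Ioo (0:ℝ) 1, F (1 / f x) = -(x / f x)) :
    (∀ x ∈ Ioo (0:ℝ) 1,
      deriv (deriv F) (1 / f x) = deriv (deriv f) x * (f x) ^ 3 / (deriv f x) ^ 3) ∧
    (∀ U ∈ Ioo (1:ℝ) (1 / f sI), deriv (deriv F) U < 0) ∧
    (∀ U ∈ Ioi (1 / f sI), 0 < deriv (deriv F) U) := by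
  have hfd : Differentiable ℝ f := hf.differentiable (by norm_num)
  have hf2 : ContDiff ℝ 1 (deriv f) := by
    have h2 : ContDiff ℝ (1+1 : ℕ) f := by norm_num [hf]
    exact ((contDiff_succ_iff_deriv (n := 1)).mp h2).2.2
  have hfd2 : Differentiable ℝ (deriv f) := hf2.differentiable (by norm_num)
  set u : ℝ → ℝ := fun x => 1 / f x with hu_def
  have hustrict : ∀ y ∈ Ioo (0:ℝ) 1,
      HasStrictDerivAt u (-(deriv f y) / (f y)^2) y := by
    intro y hy
    have hstr : HasStrictDerivAt f (deriv f y) y :=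
      hf.contDiffAt.hasStrictDerivAt (by norm_num)
    have := (hasStrictDerivAt_const y (1:ℝ)).div hstr (ne_of_gt (hfpos _ hy))
    show HasStrictDerivAt (fun x => 1 / f x) _ y
    rw [show (fun x => 1 / f x) = (fun x => (1:ℝ)) / f from rfl]
    exact this.congr_deriv (by ring)
  have hune : ∀ y ∈ Ioo (0:ℝ) 1, (-(deriv f y) / (f y)^2) ≠ 0 := by
    intro y hy
    have h1 := hf' _ hy; have h2 := hfpos _ hy
    have : (-(deriv f y) / (f y)^2) < 0 := by
      apply div_neg_of_neg_of_pos <;> [linarith; positivity]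
    exact ne_of_lt this
  -- First derivative of F on the image of u
  have derivF_eq : ∀ y ∈ Ioo (0:ℝ) 1, deriv F (u y) = f y / deriv f y - y := by
    intro y hy
    have hfy := hfpos _ hy; have hfy' := hf' _ hy
    have hq : HasDerivAt (fun x => -(x / f x))
        (-((1 * f y - y * deriv f y) / (f y)^2)) y := by
      exact ((hasDerivAt_id y).div (hfd y).hasDerivAt (ne_of_gt hfy)).neg
    have hev : ∀ᶠ x in 𝓝 y, F (u x) = -(x / f x) := by
      filter_upwards [isOpen_Ioo.mem_nhds hy] with x hx using hF x hx
    have h3 : deriv f y ≠ 0 := ne_of_gt hfy'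
    have h4 : f y ≠ 0 := ne_of_gt hfy
    have hval : -((1 * f y - y * deriv f y) / f y ^ 2) / (-deriv f y / f y ^ 2)
        = f y / deriv f y - y := by
      field_simp
    have := (key_chain (hustrict y hy) (hune y hy) hq hev).deriv
    rw [this, hval]
  -- Second derivative formula
  have main : ∀ x ∈ Ioo (0:ℝ) 1,
      deriv (deriv F) (1 / f x) = deriv (deriv f) x * (f x) ^ 3 / (deriv f x) ^ 3 := by
    intro y hy
    have hfy := hfpos _ hy; have hfy' := hf' _ hy
    have hq : HasDerivAt (fun x => f x / deriv f x - x)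
        ((deriv f y * deriv f y - f y * deriv (deriv f) y) / (deriv f y)^2 - 1) y := by
      exact ((hfd y).hasDerivAt.div (hfd2 y).hasDerivAt (ne_of_gt hfy')).sub (hasDerivAt_id y)
    have hev : ∀ᶠ x in 𝓝 y, deriv F (u x) = f x / deriv f x - x := by
      filter_upwards [isOpen_Ioo.mem_nhds hy] with x hx using derivF_eq x hx
    have h3 : deriv f y ≠ 0 := ne_of_gt hfy'
    have h4 : f y ≠ 0 := ne_of_gt hfy
    have := (key_chain (hustrict y hy) (hune y hy) hq hev).deriv
    rw [show (1 : ℝ) / f y = u y from rfl, this]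
    field_simp
    ring
  have smono : StrictMonoOn f (Icc (0:ℝ) 1) := by
    apply strictMonoOn_of_deriv_pos (convex_Icc 0 1) hf.continuous.continuousOn
    intro x hx
    rw [interior_Icc] at hx
    exact hf' x hx
  have hfsI0 : 0 < f sI := hfpos _ hsI
  have hfsI1 : f sI < 1 := by
    have := smono (Ioo_subset_Icc_self hsI) (right_mem_Icc.2 (by norm_num)) hsI.2
    rwa [hf1] at this
  refine ⟨main, ?_, ?_⟩
  · -- F'' < 0 on (1, 1/f sI)
    intro U hU
    have hU0 : (0:ℝ) < U := lt_trans one_pos hU.1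
    have h1U : 1 / U ∈ Ioo (f sI) (f 1) := by
      constructor
      · rw [lt_div_iff₀ hU0]
        have h2 := hU.2
        rw [lt_div_iff₀ hfsI0] at h2
        linarith
      · rw [hf1, div_lt_one hU0]; exact hU.1
    obtain ⟨x, hx, hfx⟩ := intermediate_value_Ioo hsI.2.le
      hf.continuous.continuousOn h1U
    have hx01 : x ∈ Ioo (0:ℝ) 1 := ⟨lt_trans hsI.1 hx.1, hx.2⟩
    have hUx : 1 / f x = U := by rw [hfx, one_div_one_div]
    rw [← hUx, main x hx01]
    have h1 : deriv (deriv f) x < 0 := hconc x hx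
    have h2 : 0 < f x := hfpos x hx01
    have h3 : 0 < deriv f x := hf' x hx01
    apply div_neg_of_neg_of_pos
    · exact mul_neg_of_neg_of_pos h1 (by positivity)
    · positivity
  · -- F'' > 0 beyond 1/f sI
    intro U hU
    have hsIU : 1 / f sI < U := hU
    have hU0 : (0:ℝ) < U := lt_trans (by positivity) hsIU
    have h1U0 : (0:ℝ) < 1 / U := by positivity
    have hUsI : 1 / U < f sI := by
      rw [div_lt_iff₀ hU0]
      rw [div_lt_iff₀ hfsI0] at hsIU
      linarith
    -- find a small point where f < 1/U
    have hev : ∀ᶠ a in nhdsWithin 0 (Ioi (0:ℝ)), f a < 1 / U :=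
      hf_lim.eventually (Filter.Tendsto.eventually_lt_const h1U0 tendsto_id)
    have hev2 : ∀ᶠ a in nhdsWithin 0 (Ioi (0:ℝ)), a ∈ Ioo (0:ℝ) sI :=
      Ioo_mem_nhdsGT_of_mem ⟨le_refl 0, hsI.1⟩
    obtain ⟨a, ha1, ha2⟩ := (hev.and hev2).exists
    have h1U : 1 / U ∈ Ioo (f a) (f sI) := ⟨ha1, hUsI⟩
    obtain ⟨x, hx, hfx⟩ := intermediate_value_Ioo ha2.2.le
      hf.continuous.continuousOn h1U
    have hx0sI : x ∈ Ioo (0:ℝ) sI := ⟨lt_trans ha2.1 hx.1, hx.2⟩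
    have hx01 : x ∈ Ioo (0:ℝ) 1 := ⟨hx0sI.1, lt_trans hx0sI.2 hsI.2⟩
    have hUx : 1 / f x = U := by rw [hfx, one_div_one_div]
    rw [← hUx, main x hx01]
    have h1 : 0 < deriv (deriv f) x := hconv x hx0sI
    have h2 : 0 < f x := hfpos x hx01
    have h3 : 0 < deriv f x := hf' x hx01
    apply div_pos (mul_pos h1 (by positivity)) (by positivity)
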